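/- For d ≥ 1 and 0 ≤ j ≤ d, the generating function identity Σ_{i=0}^{d} B(d,i,j) t^i / (1-t)^{d+1} = Σ_{r≥0} binom(d,j) r^j (r+1)^{d-j} t^r holds as an identity of formal power series, where B(d,i,j) is the number of signed permutations in B_d with i type-B descents and j negative entries. -/

import Mathlib

open Finset

/-- The set of descent positions (0-based: `k ∈ descSet σ` means a descent between
the 1-based positions `k+1` and `k+2`) of a permutation of `Fin n`. -/
def descSet {n : ℕ} (σ : Equiv.Perm (Fin n)) : Finset (Fin n) :=
  Finset.univ.filter (fun k => ∃ m : Fin n, (m : ℕ) = (k : ℕ) + 1 ∧ σ m < σ k)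

/-- The number of descents of a permutation of `Fin n`. -/
def des {n : ℕ} (σ : Equiv.Perm (Fin n)) : ℕ := (descSet σ).card

/-- `A d i j` : the number of permutations `σ` of `{1,…,d}` with `σ(1) = j` and
exactly `i` descents (in particular `A d i j = 0` for `i < 0` or `i ≥ d`). -/
noncomputable def A (d : ℕ) (i : ℤ) (j : ℕ) : ℕ :=
  Nat.card {σ : Equiv.Perm (Fin d) //
    (∀ k : Fin d, (k : ℕ) = 0 → (σ k : ℕ) + 1 = j) ∧ (des σ : ℤ) = i}

/-- A signed permutation of `{±1,…,±d}` (an element of the hyperoctahedral group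
`B_d`), encoded as an ordinary permutation together with a sign for each position. -/
abbrev SignedPerm (d : ℕ) := Equiv.Perm (Fin d) × (Fin d → Bool)

/-- The value `τ(k) ∈ ℤ` of a signed permutation at position `k ∈ {1,…,d}`
(1-based), with the convention `τ(0) = 0`. -/
def sval {d : ℕ} (τ : SignedPerm d) (k : ℕ) : ℤ :=
  if h : 1 ≤ k ∧ k ≤ d then
    (if τ.2 ⟨k - 1, by omega⟩ then -(((τ.1 ⟨k - 1, by omega⟩ : Fin d) : ℕ) + 1 : ℤ)
     else (((τ.1 ⟨k - 1, by omega⟩ : Fin d) : ℕ) + 1 : ℤ))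
  else 0

/-- The number of type-`B` descents of a signed permutation: the number of
`i ∈ {0,…,d-1}` with `τ(i) > τ(i+1)` (where `τ(0) = 0`). -/
def desB {d : ℕ} (τ : SignedPerm d) : ℕ :=
  ((Finset.range d).filter (fun k => sval τ (k + 1) < sval τ k)).card

/-- `N(τ)`: the number of `i ∈ {1,…,d}` with `τ(i) < 0`. -/
def negEntries {d : ℕ} (τ : SignedPerm d) : ℕ :=
  ((Finset.Icc 1 d).filter (fun k => sval τ k < 0)).card

/-- `B d i j`: the number of signed permutations in `B_d` with `i` type-`B`
descents and `j` negative entries. -/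
noncomputable def B (d i j : ℕ) : ℕ :=
  Nat.card {τ : SignedPerm d // desB τ = i ∧ negEntries τ = j}

namespace BGF

variable {d : ℕ}

/-! ### generic order helpers -/

lemma mono_of_adj {α : Type*} [Preorder α] {n : ℕ} {g : Fin n → α}
    (h : ∀ k (hk : k + 1 < n), g ⟨k, by omega⟩ ≤ g ⟨k + 1, hk⟩) : Monotone g := by
  rintro ⟨a, ha⟩ ⟨b, hb⟩ hab
  rw [Fin.mk_le_mk] at hab
  induction b with
  | zero =>
      have : a = 0 := by omega
      subst this; exact le_rfl
  | succ b ih =>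
      rcases Nat.lt_or_ge a (b + 1) with h1 | h1
      · exact le_trans (ih (by omega) (by omega)) (h b hb)
      · have : a = b + 1 := by omega
        subst this; exact le_rfl

lemma smono_of_adj {α : Type*} [Preorder α] {n : ℕ} {g : Fin n → α}
    (h : ∀ k (hk : k + 1 < n), g ⟨k, by omega⟩ < g ⟨k + 1, hk⟩) : StrictMono g := by
  rintro ⟨a, ha⟩ ⟨b, hb⟩ hab
  rw [Fin.mk_lt_mk] at hab
  induction b with
  | zero => omega
  | succ b ih =>
      rcases Nat.lt_or_ge a b with h1 | h1
      · exact lt_trans (ih (by omega) (by omega)) (h b hb)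
      · have : a = b := by omega
        subst this; exact h a hb

lemma gap_of_smono {n : ℕ} {g : Fin n → ℕ} (hg : StrictMono g) :
    ∀ (a b : Fin n), a ≤ b → g a + ((b : ℕ) - (a : ℕ)) ≤ g b := by
  rintro ⟨a, ha⟩ ⟨b, hb⟩ hab
  rw [Fin.mk_le_mk] at hab
  show g ⟨a, ha⟩ + (b - a) ≤ g ⟨b, hb⟩
  induction b with
  | zero =>
      have : a = 0 := by omega
      subst this; simp
  | succ b ih =>
      rcases Nat.lt_or_ge a (b + 1) with h1 | h1
      · have h2 := ih (by omega) (by omega)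
        have h3 : g ⟨b, by omega⟩ < g ⟨b + 1, hb⟩ := hg (by rw [Fin.mk_lt_mk]; omega)
        omega
      · have : a = b + 1 := by omega
        subst this; simp

/-! ### keys and standardization -/

def theta (f : Fin d → ℤ) (p : Fin d) : ℤ :=
  if f p < 0 then -(((p : ℕ) : ℤ) + 1) else ((p : ℕ) : ℤ) + 1

def K (f : Fin d → ℤ) (p : Fin d) : ℤ ×ₗ ℤ := toLex (|f p|, theta f p)

lemma theta_injective (f : Fin d → ℤ) : Function.Injective (theta f) := by
  intro p q h
  unfold theta at h
  apply Fin.ext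
  split_ifs at h <;> omega

lemma K_injective (f : Fin d → ℤ) : Function.Injective (K f) := by
  intro p q h
  unfold K at h
  have h2 : (|f p|, theta f p) = (|f q|, theta f q) := toLex.injective h
  exact theta_injective f (congrArg Prod.snd h2)

noncomputable def std (f : Fin d → ℤ) : SignedPerm d :=
  (Tuple.sort (K f), fun k => decide (f (Tuple.sort (K f) k) < 0))

lemma sval_zero (τ : SignedPerm d) : sval τ 0 = 0 := by simp [sval]

lemma sval_apply (τ : SignedPerm d) {k : ℕ} (hk : k < d) :
    sval τ (k + 1) = if τ.2 ⟨k, hk⟩ then -(((τ.1 ⟨k, hk⟩ : Fin d) : ℕ) + 1 : ℤ)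
      else (((τ.1 ⟨k, hk⟩ : Fin d) : ℕ) + 1 : ℤ) := by
  rw [sval, dif_pos ⟨by omega, by omega⟩]
  rfl

lemma std_eq_iff {f : Fin d → ℤ} {τ : SignedPerm d} :
    std f = τ ↔ (StrictMono fun k => K f (τ.1 k)) ∧ ∀ k, τ.2 k = decide (f (τ.1 k) < 0) := by
  constructor
  · rintro rfl
    constructor
    · have hmono : Monotone (K f ∘ Tuple.sort (K f)) := Tuple.monotone_sort (K f)
      have hinj : Function.Injective (K f ∘ Tuple.sort (K f)) :=
        (K_injective f).comp (Equiv.injective _)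
      exact hmono.strictMono_of_injective hinj
    · intro k; rfl
  · rintro ⟨h1, h2⟩
    have hσ : τ.1 = Tuple.sort (K f) := by
      rw [Tuple.eq_sort_iff]
      refine ⟨h1.monotone, fun a b hab hKeq => ?_⟩
      exact absurd (τ.1.injective (K_injective f hKeq)) hab.ne
    have : std f = (Tuple.sort (K f), fun k => decide (f (Tuple.sort (K f) k) < 0)) := rfl
    rw [this, Prod.ext_iff]
    refine ⟨hσ.symm, ?_⟩
    funext k
    rw [h2 k, hσ]

lemma sval_std {f : Fin d → ℤ} {τ : SignedPerm d} (h : std f = τ) {k : ℕ} (hk : k < d) :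
    sval τ (k + 1) = theta f (τ.1 ⟨k, hk⟩) := by
  have hε := (std_eq_iff.mp h).2 ⟨k, hk⟩
  rw [sval_apply τ hk, theta, hε]
  by_cases hneg : f (τ.1 ⟨k, hk⟩) < 0 <;> simp [hneg]

/-! ### partial descent counts -/

def delta (τ : SignedPerm d) (k : ℕ) : ℕ :=
  (((Finset.range d).filter fun m => sval τ (m + 1) < sval τ m).filter fun m => m ≤ k).card

lemma desB_eq (τ : SignedPerm d) :
    desB τ = ((Finset.range d).filter fun m => sval τ (m + 1) < sval τ m).card := rfl

lemma delta_mono (τ : SignedPerm d) {k l : ℕ} (h : k ≤ l) : delta τ k ≤ delta τ l := by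
  apply Finset.card_le_card
  apply Finset.monotone_filter_right
  intro m hm
  omega

lemma delta_le_desB (τ : SignedPerm d) (k : ℕ) : delta τ k ≤ desB τ :=
  Finset.card_le_card (Finset.filter_subset _ _)

lemma delta_eq_desB (τ : SignedPerm d) {k : ℕ} (h : d - 1 ≤ k) : delta τ k = desB τ := by
  rw [delta, desB_eq, Finset.filter_true_of_mem]
  intro m hm
  rw [Finset.mem_filter, Finset.mem_range] at hm
  omega

lemma delta_zero (τ : SignedPerm d) (hd : 0 < d) :
    delta τ 0 = if sval τ 1 < 0 then 1 else 0 := by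
  rw [delta]
  have he : (((Finset.range d).filter fun m => sval τ (m + 1) < sval τ m).filter fun m => m ≤ 0)
      = ((Finset.range d).filter fun m => sval τ (m + 1) < sval τ m).filter fun m => m = 0 :=
    Finset.filter_congr fun m _ => by simp [Nat.le_zero]
  rw [he, Finset.filter_eq']
  by_cases h : sval τ 1 < 0
  · rw [if_pos, if_pos h, Finset.card_singleton]
    rw [Finset.mem_filter, Finset.mem_range]
    exact ⟨hd, by rw [sval_zero]; exact h⟩
  · rw [if_neg, if_neg h, Finset.card_empty]
    rw [Finset.mem_filter, Finset.mem_range, sval_zero]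
    rintro ⟨-, h2⟩
    exact h h2

lemma delta_succ (τ : SignedPerm d) (k : ℕ) :
    delta τ (k + 1) = delta τ k +
      if (k + 1 < d ∧ sval τ (k + 1 + 1) < sval τ (k + 1)) then 1 else 0 := by
  rw [delta, delta]
  have he : (((Finset.range d).filter fun m => sval τ (m + 1) < sval τ m).filter fun m => m ≤ k + 1)
      = ((Finset.range d).filter fun m => sval τ (m + 1) < sval τ m).filter
          fun m => m ≤ k ∨ m = k + 1 :=
    Finset.filter_congr fun m _ => by constructor <;> (intro h1; omega)
  rw [he, Finset.filter_or, Finset.card_union_of_disjoint, Finset.filter_eq']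
  · congr 1
    by_cases h : k + 1 ∈ (Finset.range d).filter fun m => sval τ (m + 1) < sval τ m
    · rw [if_pos h, Finset.card_singleton, if_pos]
      rw [Finset.mem_filter, Finset.mem_range] at h
      exact h
    · rw [if_neg h, Finset.card_empty, if_neg]
      rw [Finset.mem_filter, Finset.mem_range] at h
      tauto
  · rw [Finset.disjoint_filter]
    intro m _ hm
    omega

lemma one_le_delta (τ : SignedPerm d) :
    ∀ k, k < d → sval τ (k + 1) < 0 → 1 ≤ delta τ k := by
  intro k
  induction k with
  | zero =>
      intro hk hneg
      rw [delta_zero τ hk]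
      rw [if_pos hneg]
  | succ k ih =>
      intro hk hneg
      by_cases hdes : sval τ (k + 1 + 1) < sval τ (k + 1)
      · rw [delta_succ, if_pos ⟨hk, hdes⟩]
        omega
      · have h1 : sval τ (k + 1) < 0 := by
          push_neg at hdes
          calc sval τ (k + 1) ≤ sval τ (k + 1 + 1) := hdes
          _ < 0 := hneg
        exact le_trans (ih (by omega) h1) (delta_mono τ (Nat.le_succ k))

/-! ### consequences of standardization -/

lemma key_step {f : Fin d → ℤ} {τ : SignedPerm d} (h : std f = τ) {k : ℕ} (hk : k + 1 < d) :
    (f (τ.1 ⟨k, by omega⟩)).natAbs + (if sval τ (k + 1 + 1) < sval τ (k + 1) then 1 else 0)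
      ≤ (f (τ.1 ⟨k + 1, hk⟩)).natAbs := by
  have hsm := (std_eq_iff.mp h).1
  have hlt : K f (τ.1 ⟨k, by omega⟩) < K f (τ.1 ⟨k + 1, hk⟩) :=
    hsm (by rw [Fin.mk_lt_mk]; omega)
  rw [K, K, Prod.Lex.lt_iff] at hlt
  have h1 : sval τ (k + 1) = theta f (τ.1 ⟨k, by omega⟩) := sval_std h (by omega)
  have h2 : sval τ (k + 1 + 1) = theta f (τ.1 ⟨k + 1, hk⟩) := sval_std h hk
  by_cases hdes : sval τ (k + 1 + 1) < sval τ (k + 1)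
  · rw [if_pos hdes]
    rcases hlt with h3 | ⟨-, h3⟩
    · simp only [ofLex_toLex, Int.abs_eq_natAbs] at h3
      omega
    · exfalso
      simp only [ofLex_toLex] at h3
      rw [h1, h2] at hdes
      exact absurd h3 (not_lt.mpr hdes.le)
  · rw [if_neg hdes]
    rcases hlt with h3 | ⟨h3, -⟩ <;> (simp only [ofLex_toLex, Int.abs_eq_natAbs] at h3; omega)

lemma delta_le_natAbs {f : Fin d → ℤ} {τ : SignedPerm d} (h : std f = τ) :
    ∀ k (hk : k < d), delta τ k ≤ (f (τ.1 ⟨k, hk⟩)).natAbs := by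
  intro k
  induction k with
  | zero =>
      intro hk
      rw [delta_zero τ hk]
      by_cases hneg : sval τ 1 < 0
      · rw [if_pos hneg]
        have h1 : sval τ (0 + 1) = theta f (τ.1 ⟨0, hk⟩) := sval_std h hk
        rw [show (0 : ℕ) + 1 = 1 from rfl] at h1
        rw [h1, theta] at hneg
        split_ifs at hneg with h2
        · omega
        · omega
      · rw [if_neg hneg]
        omega
  | succ k ih =>
      intro hk
      have h1 := key_step h hk
      have h3 := ih (by omega)
      rw [delta_succ]
      by_cases hdes : sval τ (k + 1 + 1) < sval τ (k + 1)
      · rw [if_pos ⟨hk, hdes⟩]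
        rw [if_pos hdes] at h1
        omega
      · rw [if_neg (by tauto)]
        rw [if_neg hdes] at h1
        omega

lemma negEntries_eq (τ : SignedPerm d) :
    negEntries τ = (univ.filter fun k : Fin d => τ.2 k = true).card := by
  rw [negEntries]
  symm
  refine Finset.card_bij' (fun (k : Fin d) _ => (k : ℕ) + 1)
    (fun a ha => (⟨a - 1, by rw [Finset.mem_filter, Finset.mem_Icc] at ha; omega⟩ : Fin d))
    ?_ ?_ ?_ ?_
  · intro k hk
    rw [Finset.mem_filter] at hk
    have hklt := k.isLt
    simp only [Finset.mem_filter, Finset.mem_Icc]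
    refine ⟨⟨by omega, by omega⟩, ?_⟩
    rw [sval_apply τ k.isLt, Fin.eta, if_pos hk.2]
    omega
  · intro a ha
    rw [Finset.mem_filter, Finset.mem_Icc] at ha
    obtain ⟨⟨ha1, ha2⟩, ha3⟩ := ha
    rw [Finset.mem_filter]
    refine ⟨Finset.mem_univ _, ?_⟩
    obtain ⟨b, rfl⟩ : ∃ b, a = b + 1 := ⟨a - 1, by omega⟩
    rw [sval_apply τ (show b < d by omega)] at ha3
    by_contra hb
    rw [if_neg (by simpa using hb)] at ha3
    omega
  · intro k _
    apply Fin.ext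
    simp
  · intro a ha
    rw [Finset.mem_filter, Finset.mem_Icc] at ha
    simp only [Fin.val_mk]
    omega

lemma sval_inj (τ : SignedPerm d) {k l : ℕ} (hk : k < d) (hl : l < d)
    (h : sval τ (k + 1) = sval τ (l + 1)) : k = l := by
  rw [sval_apply τ hk, sval_apply τ hl] at h
  have : τ.1 ⟨k, hk⟩ = τ.1 ⟨l, hl⟩ := by
    apply Fin.ext
    split_ifs at h <;> omega
  have := τ.1.injective this
  exact congrArg Fin.val this

/-! ### counting bounded monotone sequences -/

open scoped Classical in
noncomputable def Afin (d R : ℕ) : Finset (Fin d → ℕ) :=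
  (Fintype.piFinset fun _ : Fin d => Finset.range (R + 1)).filter fun a => Monotone a

open scoped Classical in
lemma Afin_card (d R : ℕ) : (Afin d R).card = (d + R).choose d := by
  have hc : (Finset.powersetCard d (Finset.range (d + R))).card = (d + R).choose d := by
    rw [Finset.card_powersetCard, Finset.card_range]
  rw [← hc]
  refine Finset.card_bij'
    (fun a _ => Finset.image (fun k : Fin d => a k + (k : ℕ)) Finset.univ)
    (fun s hs => fun k => (s.orderEmbOfFin (by
      rw [Finset.mem_powersetCard] at hs; exact hs.2) k : ℕ) - (k : ℕ))
    ?_ ?_ ?_ ?_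
  · -- forward membership
    intro a ha
    rw [Afin, Finset.mem_filter, Fintype.mem_piFinset] at ha
    obtain ⟨hbd, hmono⟩ := ha
    rw [Finset.mem_powersetCard]
    constructor
    · intro x hx
      rw [Finset.mem_image] at hx
      obtain ⟨k, -, rfl⟩ := hx
      have h1 : a k ≤ R := by
        have := hbd k
        rw [Finset.mem_range] at this
        omega
      have := k.isLt
      rw [Finset.mem_range]
      omega
    · have hinj : Function.Injective (fun k : Fin d => a k + (k : ℕ)) := by
        have hsm : StrictMono (fun k : Fin d => a k + (k : ℕ)) := by
          intro x y hxy
          have := hmono hxy.le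
          have := Fin.lt_def.mp hxy
          simp only []
          omega
        exact hsm.injective
      rw [Finset.card_image_of_injective _ hinj, Finset.card_univ, Fintype.card_fin]
  · -- backward membership
    intro s hs
    obtain ⟨hsub, hcard⟩ := Finset.mem_powersetCard.mp hs
    show (fun k : Fin d => (s.orderEmbOfFin hcard k : ℕ) - (k : ℕ)) ∈ Afin d R
    have hmem : ∀ k : Fin d, (s.orderEmbOfFin hcard k : ℕ) ∈ Finset.range (d + R) := fun k =>
      hsub (s.orderEmbOfFin_mem hcard k)
    have hsm : StrictMono fun k : Fin d => (s.orderEmbOfFin hcard k : ℕ) :=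
      fun x y hxy => (s.orderEmbOfFin hcard).strictMono hxy
    have hgap := gap_of_smono hsm
    rw [Afin, Finset.mem_filter, Fintype.mem_piFinset]
    constructor
    · intro k
      rw [Finset.mem_range]
      have hk := k.isLt
      have hlast : (d - 1 : ℕ) < d := by omega
      have h1 := hgap k ⟨d - 1, hlast⟩
        (by rw [Fin.le_def]; have := k.isLt; simp only [Fin.val_mk]; omega)
      have h2 := hmem ⟨d - 1, hlast⟩
      rw [Finset.mem_range] at h2
      simp only [Fin.val_mk] at h1
      omega
    · intro x y hxy
      have h1 := hgap x y hxy
      have h2 := Fin.le_def.mp hxy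
      simp only []
      omega
  · -- left inverse
    intro a ha
    rw [Afin, Finset.mem_filter, Fintype.mem_piFinset] at ha
    obtain ⟨hbd, hmono⟩ := ha
    have hsm : StrictMono (fun k : Fin d => a k + (k : ℕ)) := by
      intro x y hxy
      have := hmono hxy.le
      have := Fin.lt_def.mp hxy
      simp only []
      omega
    have hcard : (Finset.image (fun k : Fin d => a k + (k : ℕ)) Finset.univ).card = d := by
      rw [Finset.card_image_of_injective _ hsm.injective, Finset.card_univ, Fintype.card_fin]
    have hu := Finset.orderEmbOfFin_unique hcard
      (f := fun k : Fin d => a k + (k : ℕ))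
      (fun x => Finset.mem_image_of_mem _ (Finset.mem_univ x)) hsm
    funext k
    show ((Finset.image (fun k : Fin d => a k + (k : ℕ)) Finset.univ).orderEmbOfFin hcard k : ℕ)
      - (k : ℕ) = a k
    rw [← hu]
    simp
  · -- right inverse
    intro s hs
    obtain ⟨hsub, hcard⟩ := Finset.mem_powersetCard.mp hs
    show Finset.image
      (fun k : Fin d => ((s.orderEmbOfFin hcard k : ℕ) - (k : ℕ)) + (k : ℕ)) Finset.univ = s
    have hsm : StrictMono fun k : Fin d => (s.orderEmbOfFin hcard k : ℕ) :=
      fun x y hxy => (s.orderEmbOfFin hcard).strictMono hxy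
    have hgap := gap_of_smono hsm
    have hke : ∀ k : Fin d, (k : ℕ) ≤ (s.orderEmbOfFin hcard k : ℕ) := by
      intro k
      rcases Nat.eq_zero_or_pos d with hd | hd
      · exact absurd k.isLt (by omega)
      · have h1 := hgap ⟨0, hd⟩ k (by rw [Fin.le_def]; simp)
        simp only [Fin.val_mk] at h1
        omega
    have himg : (fun k : Fin d => ((s.orderEmbOfFin hcard k : ℕ) - (k : ℕ)) + (k : ℕ))
        = fun k : Fin d => (s.orderEmbOfFin hcard k : ℕ) := by
      funext k
      have := hke k
      omega
    rw [himg]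
    apply Finset.coe_injective
    rw [Finset.coe_image, Finset.coe_univ, Set.image_univ]
    exact Finset.range_orderEmbOfFin s hcard

/-! ### the set of bounded functions with j negative values -/

noncomputable def Sfin (d j r : ℕ) : Finset (Fin d → ℤ) :=
  (Fintype.piFinset fun _ : Fin d => Finset.Icc (-(r : ℤ)) r).filter
    fun f => (Finset.univ.filter fun p => f p < 0).card = j

lemma Sfin_card (d j r : ℕ) (hj : j ≤ d) :
    (Sfin d j r).card = d.choose j * (r ^ j * (r + 1) ^ (d - j)) := by
  classical
  rw [Finset.card_eq_sum_card_fiberwise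
    (f := fun f : Fin d → ℤ => Finset.univ.filter fun p => f p < 0)
    (t := Finset.powersetCard j (Finset.univ : Finset (Fin d)))
    (fun f hf => by
      rw [Finset.mem_coe, Finset.mem_powersetCard_univ]
      exact (Finset.mem_filter.mp hf).2)]
  have hfib : ∀ s ∈ Finset.powersetCard j (Finset.univ : Finset (Fin d)),
      ((Sfin d j r).filter fun f => (Finset.univ.filter fun p => f p < 0) = s)
        = Fintype.piFinset fun p : Fin d =>
            if p ∈ s then Finset.Icc (-(r : ℤ)) (-1) else Finset.Icc 0 (r : ℤ) := by
    intro s hs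
    rw [Finset.mem_powersetCard_univ] at hs
    ext f
    rw [Finset.mem_filter, Sfin, Finset.mem_filter, Fintype.mem_piFinset,
      Fintype.mem_piFinset]
    constructor
    · rintro ⟨⟨hbd, -⟩, hset⟩
      intro p
      have h1 := hbd p
      rw [Finset.mem_Icc] at h1
      by_cases hp : p ∈ s
      · rw [if_pos hp, Finset.mem_Icc]
        rw [← hset, Finset.mem_filter] at hp
        omega
      · rw [if_neg hp, Finset.mem_Icc]
        rw [← hset, Finset.mem_filter] at hp
        push_neg at hp
        have := hp (Finset.mem_univ p)
        omega
    · intro hmem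
      have hiff : ∀ p, f p < 0 ↔ p ∈ s := by
        intro p
        have h1 := hmem p
        by_cases hp : p ∈ s
        · rw [if_pos hp, Finset.mem_Icc] at h1
          constructor
          · intro; exact hp
          · intro; omega
        · rw [if_neg hp, Finset.mem_Icc] at h1
          constructor
          · intro; omega
          · intro h2; exact absurd h2 hp
      have hset : (Finset.univ.filter fun p => f p < 0) = s := by
        ext p
        rw [Finset.mem_filter]
        constructor
        · rintro ⟨-, h2⟩; exact (hiff p).mp h2
        · intro h2; exact ⟨Finset.mem_univ p, (hiff p).mpr h2⟩
      refine ⟨⟨?_, by rw [hset, hs]⟩, hset⟩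
      intro p
      have h1 := hmem p
      rw [Finset.mem_Icc]
      by_cases hp : p ∈ s
      · rw [if_pos hp, Finset.mem_Icc] at h1
        omega
      · rw [if_neg hp, Finset.mem_Icc] at h1
        omega
  rw [Finset.sum_congr rfl fun s hs => by rw [hfib s hs]]
  have hcardpi : ∀ s ∈ Finset.powersetCard j (Finset.univ : Finset (Fin d)),
      (Fintype.piFinset fun p : Fin d =>
        if p ∈ s then Finset.Icc (-(r : ℤ)) (-1) else Finset.Icc 0 (r : ℤ)).card
        = r ^ j * (r + 1) ^ (d - j) := by
    intro s hs
    rw [Finset.mem_powersetCard_univ] at hs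
    rw [Fintype.card_piFinset]
    have hterm : ∀ p : Fin d,
        ((if p ∈ s then Finset.Icc (-(r : ℤ)) (-1) else Finset.Icc 0 (r : ℤ)).card)
          = if p ∈ s then r else r + 1 := by
      intro p
      by_cases hp : p ∈ s
      · rw [if_pos hp, if_pos hp, Int.card_Icc]
        simp
      · rw [if_neg hp, if_neg hp, Int.card_Icc]
        simp
    rw [Finset.prod_congr rfl fun p _ => hterm p, Finset.prod_ite, Finset.prod_const,
      Finset.prod_const]
    have h1 : Finset.univ.filter (fun p : Fin d => p ∈ s) = s := by
      ext p; simp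
    have h2 : (Finset.univ.filter fun p : Fin d => ¬ p ∈ s).card = d - j := by
      have : Finset.univ.filter (fun p : Fin d => ¬ p ∈ s) = sᶜ := by
        ext p; simp
      rw [this, Finset.card_compl, Fintype.card_fin, hs]
    rw [h1, h2, hs]
  rw [Finset.sum_congr rfl hcardpi, Finset.sum_const, Finset.card_powersetCard,
    Finset.card_univ, Fintype.card_fin, smul_eq_mul]

/-! ### fiber analysis -/

def cseq (f : Fin d → ℤ) (τ : SignedPerm d) (k : ℕ) : ℕ :=
  if hk : k < d then (f (τ.1 ⟨k, hk⟩)).natAbs else 0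

lemma cseq_eq (f : Fin d → ℤ) (τ : SignedPerm d) {k : ℕ} (hk : k < d) :
    cseq f τ k = (f (τ.1 ⟨k, hk⟩)).natAbs := dif_pos hk

lemma cseq_step {f : Fin d → ℤ} {τ : SignedPerm d} (h : std f = τ) {k : ℕ} (hk : k + 1 < d) :
    cseq f τ k + (if sval τ (k + 1 + 1) < sval τ (k + 1) then 1 else 0) ≤ cseq f τ (k + 1) := by
  rw [cseq_eq f τ (show k < d by omega), cseq_eq f τ hk]
  exact key_step h hk

lemma delta_le_cseq {f : Fin d → ℤ} {τ : SignedPerm d} (h : std f = τ) {k : ℕ} (hk : k < d) :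
    delta τ k ≤ cseq f τ k := by
  rw [cseq_eq f τ hk]
  exact delta_le_natAbs h k hk

lemma cseq_le {f : Fin d → ℤ} {τ : SignedPerm d} {r : ℕ}
    (hbd : ∀ p, f p ∈ Finset.Icc (-(r : ℤ)) r) {k : ℕ} (hk : k < d) : cseq f τ k ≤ r := by
  rw [cseq_eq f τ hk]
  have := hbd (τ.1 ⟨k, hk⟩)
  rw [Finset.mem_Icc] at this
  omega

lemma negEntries_of_std {f : Fin d → ℤ} {τ : SignedPerm d} (h : std f = τ) :
    negEntries τ = (Finset.univ.filter fun p => f p < 0).card := by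
  classical
  rw [negEntries_eq]
  have hε := (std_eq_iff.mp h).2
  refine Finset.card_nbij' (fun k => τ.1 k) (fun p => τ.1.symm p) ?_ ?_ ?_ ?_
  · intro k hk
    rw [Finset.mem_coe, Finset.mem_filter] at hk ⊢
    refine ⟨Finset.mem_univ _, ?_⟩
    have := hε k
    rw [hk.2] at this
    exact of_decide_eq_true this.symm
  · intro p hp
    rw [Finset.mem_coe, Finset.mem_filter] at hp ⊢
    refine ⟨Finset.mem_univ _, ?_⟩
    have := hε (τ.1.symm p)
    rw [Equiv.apply_symm_apply] at this
    rw [this, decide_eq_true_eq]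
    exact hp.2
  · intro k _
    simp
  · intro p _
    simp

lemma desB_le_of_std {f : Fin d → ℤ} {τ : SignedPerm d} (h : std f = τ) (hd : 0 < d) {r : ℕ}
    (hbd : ∀ p, f p ∈ Finset.Icc (-(r : ℤ)) r) : desB τ ≤ r := by
  have h1 : desB τ = delta τ (d - 1) := (delta_eq_desB τ le_rfl).symm
  have h2 := delta_le_cseq h (show d - 1 < d by omega)
  have h3 := cseq_le (τ := τ) hbd (show d - 1 < d by omega)
  omega

noncomputable def F2A (τ : SignedPerm d) (f : Fin d → ℤ) : Fin d → ℕ :=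
  fun k => cseq f τ (k : ℕ) - delta τ (k : ℕ)

def A2F (τ : SignedPerm d) (a : Fin d → ℕ) : Fin d → ℤ := fun p =>
  if τ.2 (τ.1.symm p) then -((a (τ.1.symm p) + delta τ ((τ.1.symm p : Fin d) : ℕ) : ℕ) : ℤ)
  else ((a (τ.1.symm p) + delta τ ((τ.1.symm p : Fin d) : ℕ) : ℕ) : ℤ)

lemma sval_neg_of_snd (τ : SignedPerm d) {x : Fin d} (hx : τ.2 x = true) :
    sval τ ((x : ℕ) + 1) < 0 := by
  rw [sval_apply τ x.isLt, Fin.eta, if_pos hx]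
  omega

lemma A2F_neg_iff (τ : SignedPerm d) (a : Fin d → ℕ) (p : Fin d) :
    A2F τ a p < 0 ↔ τ.2 (τ.1.symm p) = true := by
  rw [A2F]
  by_cases hx : τ.2 (τ.1.symm p) = true
  · rw [if_pos hx]
    have h1 := one_le_delta τ (τ.1.symm p) (τ.1.symm p).isLt (sval_neg_of_snd τ hx)
    simp only [hx, iff_true]
    have : (1 : ℤ) ≤ ((a (τ.1.symm p) + delta τ ((τ.1.symm p : Fin d) : ℕ) : ℕ) : ℤ) := by
      push_cast
      omega
    omega
  · rw [if_neg hx]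
    constructor
    · intro hc
      exfalso
      have h0 : (0 : ℤ) ≤ ((a (τ.1.symm p) + delta τ ((τ.1.symm p : Fin d) : ℕ) : ℕ) : ℤ) :=
        Int.natCast_nonneg _
      omega
    · intro hc
      exact absurd hc hx

lemma A2F_abs (τ : SignedPerm d) (a : Fin d → ℕ) (p : Fin d) :
    |A2F τ a p| = ((a (τ.1.symm p) + delta τ ((τ.1.symm p : Fin d) : ℕ) : ℕ) : ℤ) := by
  rw [A2F]
  split_ifs with h1
  · rw [abs_neg, abs_of_nonneg (by positivity)]
  · rw [abs_of_nonneg (by positivity)]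

lemma A2F_theta (τ : SignedPerm d) (a : Fin d → ℕ) (x : Fin d) :
    theta (A2F τ a) (τ.1 x) = sval τ ((x : ℕ) + 1) := by
  have h1 := A2F_neg_iff τ a (τ.1 x)
  rw [Equiv.symm_apply_apply] at h1
  rw [theta, sval_apply τ x.isLt, Fin.eta]
  by_cases hx : τ.2 x = true
  · rw [if_pos (h1.mpr hx), if_pos hx]
  · rw [if_neg, if_neg hx]
    intro hc
    exact hx (h1.mp hc)

lemma A2F_apply (τ : SignedPerm d) (a : Fin d → ℕ) (x : Fin d) :
    A2F τ a (τ.1 x) = if τ.2 x then -((a x + delta τ (x : ℕ) : ℕ) : ℤ)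
      else ((a x + delta τ (x : ℕ) : ℕ) : ℤ) := by
  rw [A2F, Equiv.symm_apply_apply]

open scoped Classical in
lemma fiber_card (d j r : ℕ) (hd : 0 < d) (τ : SignedPerm d) :
    ((Sfin d j r).filter fun f => std f = τ).card =
      if negEntries τ = j ∧ desB τ ≤ r then (d + (r - desB τ)).choose d else 0 := by
  have hmemS : ∀ f : Fin d → ℤ, f ∈ Sfin d j r ↔
      ((∀ p, f p ∈ Finset.Icc (-(r : ℤ)) r) ∧
        (Finset.univ.filter fun p => f p < 0).card = j) := by
    intro f
    rw [Sfin, Finset.mem_filter, Fintype.mem_piFinset]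
  by_cases hcond : negEntries τ = j ∧ desB τ ≤ r
  · rw [if_pos hcond]
    obtain ⟨hneg, hile⟩ := hcond
    rw [← Afin_card d (r - desB τ)]
    refine Finset.card_nbij' (F2A τ) (A2F τ) ?_ ?_ ?_ ?_
    · -- forward membership
      intro f hf
      rw [Finset.mem_coe, Finset.mem_filter, hmemS] at hf
      obtain ⟨⟨hbd, hcount⟩, hstd⟩ := hf
      have hmono : Monotone (F2A τ f) := by
        apply mono_of_adj
        intro k hk
        show cseq f τ k - delta τ k ≤ cseq f τ (k + 1) - delta τ (k + 1)
        have h1 := cseq_step hstd hk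
        have h2 := delta_succ τ k
        have h3 := delta_le_cseq hstd (show k < d by omega)
        by_cases hdes : sval τ (k + 1 + 1) < sval τ (k + 1)
        · rw [if_pos hdes] at h1
          rw [if_pos ⟨hk, hdes⟩] at h2
          omega
        · rw [if_neg hdes] at h1
          rw [if_neg (by tauto)] at h2
          omega
      rw [Finset.mem_coe, Afin, Finset.mem_filter, Fintype.mem_piFinset]
      refine ⟨?_, hmono⟩
      intro k
      rw [Finset.mem_range]
      have hlast : d - 1 < d := by omega
      have h4 : F2A τ f k ≤ F2A τ f ⟨d - 1, hlast⟩ := by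
        apply hmono
        rw [Fin.le_def]
        have := k.isLt
        simp only [Fin.val_mk]
        omega
      have h5 : F2A τ f ⟨d - 1, hlast⟩ = cseq f τ (d - 1) - delta τ (d - 1) := rfl
      have h6 := delta_eq_desB τ (le_refl (d - 1))
      have h7 := cseq_le (τ := τ) hbd hlast
      omega
    · -- backward membership
      intro a ha
      rw [Finset.mem_coe, Afin, Finset.mem_filter, Fintype.mem_piFinset] at ha
      obtain ⟨habd, hamono⟩ := ha
      have habd' : ∀ x : Fin d, a x ≤ r - desB τ := by
        intro x
        have := habd x
        rw [Finset.mem_range] at this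
        omega
      have hb_le : ∀ x : Fin d, a x + delta τ (x : ℕ) ≤ r := by
        intro x
        have h1 := habd' x
        have h2 := delta_le_desB τ (x : ℕ)
        omega
      have habs : ∀ x : Fin d, |A2F τ a (τ.1 x)| = ((a x + delta τ (x : ℕ) : ℕ) : ℤ) := by
        intro x
        rw [A2F_abs, Equiv.symm_apply_apply]
      have hstd : std (A2F τ a) = τ := by
        rw [std_eq_iff]
        constructor
        · apply smono_of_adj
          intro k hk
          have hklt : k < d := by omega
          show K (A2F τ a) (τ.1 ⟨k, hklt⟩) < K (A2F τ a) (τ.1 ⟨k + 1, hk⟩)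
          rw [K, K, Prod.Lex.lt_iff]
          dsimp only [ofLex_toLex]
          have ha1 := habs ⟨k, hklt⟩
          have ha2 := habs ⟨k + 1, hk⟩
          have ht1 := A2F_theta τ a ⟨k, hklt⟩
          have ht2 := A2F_theta τ a ⟨k + 1, hk⟩
          simp only [Fin.val_mk] at ha1 ha2 ht1 ht2
          have hmono2 : a ⟨k, hklt⟩ ≤ a ⟨k + 1, hk⟩ := by
            apply hamono
            rw [Fin.le_def]
            simp only [Fin.val_mk]
            omega
          have h2 := delta_succ τ k
          by_cases hdes : sval τ (k + 1 + 1) < sval τ (k + 1)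
          · left
            rw [ha1, ha2]
            rw [if_pos ⟨hk, hdes⟩] at h2
            push_cast
            omega
          · have hne : sval τ (k + 1) ≠ sval τ (k + 1 + 1) := by
              intro hEq
              have := sval_inj τ hklt hk hEq
              omega
            have hlt2 : sval τ (k + 1) < sval τ (k + 1 + 1) := by
              have := not_lt.mp hdes
              omega
            rw [if_neg (by tauto)] at h2
            rcases Nat.lt_or_ge (a ⟨k, hklt⟩ + delta τ k) (a ⟨k + 1, hk⟩ + delta τ (k + 1))
              with hlt | hge
            · left
              rw [ha1, ha2]
              push_cast
              omega
            · right
              have hEq : a ⟨k, hklt⟩ + delta τ k = a ⟨k + 1, hk⟩ + delta τ (k + 1) := by omega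
              constructor
              · rw [ha1, ha2, hEq]
              · rw [ht1, ht2]
                exact hlt2
        · intro k
          have h1 := A2F_apply τ a k
          by_cases hx : τ.2 k = true
          · rw [hx]
            symm
            rw [decide_eq_true_eq, h1, if_pos hx]
            have h2 := one_le_delta τ k k.isLt (sval_neg_of_snd τ hx)
            have h3 : (1 : ℤ) ≤ ((a k + delta τ (k : ℕ) : ℕ) : ℤ) := by
              push_cast
              omega
            omega
          · rw [Bool.not_eq_true] at hx
            rw [hx]
            symm
            rw [decide_eq_false_iff_not, h1, if_neg (by rw [hx]; exact Bool.false_ne_true)]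
            have h0 : (0 : ℤ) ≤ ((a k + delta τ (k : ℕ) : ℕ) : ℤ) := Int.natCast_nonneg _
            omega
      rw [Finset.mem_coe, Finset.mem_filter, hmemS]
      refine ⟨⟨?_, ?_⟩, hstd⟩
      · intro p
        rw [Finset.mem_Icc]
        have h1 : |A2F τ a p| ≤ (r : ℤ) := by
          rw [A2F_abs]
          exact_mod_cast hb_le (τ.1.symm p)
        exact abs_le.mp h1
      · have hfe : (Finset.univ.filter fun p => A2F τ a p < 0)
            = Finset.univ.filter fun p => τ.2 (τ.1.symm p) = true :=
          Finset.filter_congr fun p _ => by rw [A2F_neg_iff τ a p]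
        rw [hfe]
        have hcs : (Finset.univ.filter fun p => τ.2 (τ.1.symm p) = true).card
            = (Finset.univ.filter fun k : Fin d => τ.2 k = true).card := by
          refine Finset.card_nbij' (fun p => τ.1.symm p) (fun k => τ.1 k) ?_ ?_ ?_ ?_
          · intro p hp
            rw [Finset.mem_coe, Finset.mem_filter] at hp ⊢
            exact ⟨Finset.mem_univ _, hp.2⟩
          · intro k hkk
            rw [Finset.mem_coe, Finset.mem_filter] at hkk ⊢
            refine ⟨Finset.mem_univ _, ?_⟩
            rw [Equiv.symm_apply_apply]
            exact hkk.2
          · intro p _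
            simp
          · intro k _
            simp
        rw [hcs, ← negEntries_eq, hneg]
    · -- left inverse
      intro f hf
      rw [Finset.mem_coe, Finset.mem_filter, hmemS] at hf
      obtain ⟨⟨hbd, hcount⟩, hstd⟩ := hf
      funext p
      have hk := (τ.1.symm p).isLt
      have hcv : cseq f τ ((τ.1.symm p : Fin d) : ℕ) = (f p).natAbs := by
        rw [cseq_eq f τ hk, Fin.eta, Equiv.apply_symm_apply]
      have hδ := delta_le_cseq hstd hk
      have hε := (std_eq_iff.mp hstd).2 (τ.1.symm p)
      rw [Equiv.apply_symm_apply] at hε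
      have hF : F2A τ f (τ.1.symm p) + delta τ ((τ.1.symm p : Fin d) : ℕ) = (f p).natAbs := by
        show cseq f τ _ - delta τ _ + delta τ _ = _
        omega
      simp only [A2F]
      rw [hF]
      by_cases hx : τ.2 (τ.1.symm p) = true
      · rw [if_pos hx]
        rw [hx] at hε
        have h2 : f p < 0 := of_decide_eq_true hε.symm
        omega
      · rw [if_neg hx]
        have h2 : ¬ f p < 0 := by
          intro hc
          exact hx (by rw [hε, decide_eq_true_eq]; exact hc)
        omega
    · -- right inverse
      intro a ha
      funext k
      have hk := k.isLt
      have hcv : cseq (A2F τ a) τ (k : ℕ) = a k + delta τ (k : ℕ) := by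
        rw [cseq_eq _ τ hk, Fin.eta]
        have h1 := A2F_abs τ a (τ.1 k)
        rw [Equiv.symm_apply_apply, Int.abs_eq_natAbs] at h1
        exact_mod_cast h1
      show cseq (A2F τ a) τ (k : ℕ) - delta τ (k : ℕ) = a k
      rw [hcv]
      omega
  · rw [if_neg hcond]
    rw [Finset.card_eq_zero, Finset.eq_empty_iff_forall_notMem]
    intro f hf
    rw [Finset.mem_filter, hmemS] at hf
    obtain ⟨⟨hbd, hcount⟩, hstd⟩ := hf
    exact hcond ⟨(negEntries_of_std hstd).trans hcount, desB_le_of_std hstd hd hbd⟩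

lemma desB_le (d : ℕ) (τ : SignedPerm d) : desB τ ≤ d := by
  rw [desB_eq]
  calc ((Finset.range d).filter fun m => sval τ (m + 1) < sval τ m).card
      ≤ (Finset.range d).card := Finset.card_filter_le _ _
    _ = d := Finset.card_range d

open scoped Classical in
lemma B_eq (d i j : ℕ) :
    B d i j = (Finset.univ.filter fun τ : SignedPerm d =>
      desB τ = i ∧ negEntries τ = j).card := by
  rw [B, Nat.card_eq_fintype_card, Fintype.card_subtype]

open scoped Classical in
lemma master (d j : ℕ) (hd : 0 < d) (hj : j ≤ d) (r : ℕ) :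
    d.choose j * (r ^ j * (r + 1) ^ (d - j)) =
      ∑ i ∈ Finset.range (d + 1),
        B d i j * (if i ≤ r then (d + (r - i)).choose d else 0) := by
  rw [← Sfin_card d j r hj]
  rw [Finset.card_eq_sum_card_fiberwise (f := std)
    (t := (Finset.univ : Finset (SignedPerm d))) (fun f _ => Finset.mem_univ _)]
  rw [Finset.sum_congr rfl fun τ _ => fiber_card d j r hd τ]
  rw [← Finset.sum_fiberwise_of_maps_to (g := desB)
    (fun τ _ => Finset.mem_range.mpr (Nat.lt_succ_of_le (desB_le d τ)))]
  refine Finset.sum_congr rfl ?_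
  intro i _
  rw [Finset.sum_congr rfl (g := fun τ => if negEntries τ = j
      then (if i ≤ r then (d + (r - i)).choose d else 0) else 0) ?_]
  · rw [← Finset.sum_filter, Finset.sum_const, smul_eq_mul, Finset.filter_filter, B_eq d i j]
  · intro τ hτ
    rw [Finset.mem_filter] at hτ
    rw [hτ.2]
    by_cases h1 : negEntries τ = j <;> by_cases h2 : i ≤ r <;> simp [h1, h2]

end BGF

open PowerSeries in
/-- The generating function identity
`(Σ_{i=0}^{d} B(d,i,j) tⁱ) / (1-t)^{d+1} = Σ_{r≥0} binom(d,j) rʲ (r+1)^{d-j} tʳ`,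
stated as an identity of formal power series over `ℚ`. -/
theorem B_generating_function (d j : ℕ) (hd : 1 ≤ d) (hj : j ≤ d) :
    (∑ i ∈ Finset.range (d + 1),
        PowerSeries.monomial i ((B d i j : ℚ))) =
      PowerSeries.mk
          (fun r : ℕ => (d.choose j : ℚ) * (r : ℚ) ^ j * ((r : ℚ) + 1) ^ (d - j)) *
        (1 - PowerSeries.X) ^ (d + 1) := by

  have hunit : ((PowerSeries.invOneSubPow ℚ (d + 1) : (PowerSeries ℚ)ˣ) : PowerSeries ℚ) *
      (1 - PowerSeries.X : PowerSeries ℚ) ^ (d + 1) = 1 := by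
    rw [← PowerSeries.invOneSubPow_inv_eq_one_sub_pow]
    exact (PowerSeries.invOneSubPow ℚ (d + 1)).val_inv
  have key : (∑ i ∈ Finset.range (d + 1), PowerSeries.monomial i ((B d i j : ℚ))) *
      ((PowerSeries.invOneSubPow ℚ (d + 1) : (PowerSeries ℚ)ˣ) : PowerSeries ℚ) =
      PowerSeries.mk
        (fun r : ℕ => (d.choose j : ℚ) * (r : ℚ) ^ j * ((r : ℚ) + 1) ^ (d - j)) := by
    ext r
    rw [PowerSeries.coeff_mk, PowerSeries.coeff_mul,
      Finset.Nat.sum_antidiagonal_eq_sum_range_succ_mk]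
    have hc1 : ∀ a : ℕ, PowerSeries.coeff a (∑ i ∈ Finset.range (d + 1),
        PowerSeries.monomial i ((B d i j : ℚ))) = if a ≤ d then (B d a j : ℚ) else 0 := by
      intro a
      rw [map_sum]
      rw [Finset.sum_congr rfl fun i _ => PowerSeries.coeff_monomial a i ((B d i j : ℚ))]
      rw [Finset.sum_ite_eq (Finset.range (d + 1)) a fun i => ((B d i j : ℚ))]
      by_cases ha : a ≤ d
      · rw [if_pos (Finset.mem_range.mpr (by omega)), if_pos ha]
      · rw [if_neg (by rw [Finset.mem_range]; omega), if_neg ha]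
    have hc2 : ∀ b : ℕ, PowerSeries.coeff b
        ((PowerSeries.invOneSubPow ℚ (d + 1) : (PowerSeries ℚ)ˣ) : PowerSeries ℚ)
        = ((d + b).choose d : ℚ) := by
      intro b
      rw [PowerSeries.invOneSubPow_val_succ_eq_mk_add_choose, PowerSeries.coeff_mk]
    rw [Finset.sum_congr rfl fun k hk => by rw [hc1 k, hc2 (r - k)]]
    -- now a sum over range (r + 1)
    have hmaster := BGF.master d j (by omega) hj r
    have hL : (∑ k ∈ Finset.range (r + 1),
        (if k ≤ d then (B d k j : ℚ) else 0) * ((d + (r - k)).choose d : ℚ))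
        = ∑ k ∈ Finset.range (d + r + 1),
        (if k ≤ d then (B d k j : ℚ) else 0) *
          (if k ≤ r then ((d + (r - k)).choose d : ℚ) else 0) := by
      rw [show (∑ k ∈ Finset.range (r + 1),
          (if k ≤ d then (B d k j : ℚ) else 0) * ((d + (r - k)).choose d : ℚ))
          = ∑ k ∈ Finset.range (r + 1),
          (if k ≤ d then (B d k j : ℚ) else 0) *
            (if k ≤ r then ((d + (r - k)).choose d : ℚ) else 0) from
        Finset.sum_congr rfl fun k hk => by
          rw [Finset.mem_range] at hk
          rw [if_pos (show k ≤ r by omega)]]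
      apply Finset.sum_subset
      · intro k hk
        rw [Finset.mem_range] at hk ⊢
        omega
      · intro k _ hk
        rw [Finset.mem_range] at hk
        rw [if_neg (show ¬ k ≤ r by omega), mul_zero]
    have hR : ((∑ i ∈ Finset.range (d + 1),
        B d i j * (if i ≤ r then (d + (r - i)).choose d else 0) : ℕ) : ℚ)
        = ∑ k ∈ Finset.range (d + r + 1),
        (if k ≤ d then (B d k j : ℚ) else 0) *
          (if k ≤ r then ((d + (r - k)).choose d : ℚ) else 0) := by
      push_cast
      rw [show (∑ k ∈ Finset.range (d + 1),
          (B d k j : ℚ) * (if k ≤ r then ((d + (r - k)).choose d : ℚ) else 0))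
          = ∑ k ∈ Finset.range (d + 1),
          (if k ≤ d then (B d k j : ℚ) else 0) *
            (if k ≤ r then ((d + (r - k)).choose d : ℚ) else 0) from
        Finset.sum_congr rfl fun k hk => by
          rw [Finset.mem_range] at hk
          rw [if_pos (show k ≤ d by omega)]]
      apply Finset.sum_subset
      · intro k hk
        rw [Finset.mem_range] at hk ⊢
        omega
      · intro k _ hk
        rw [Finset.mem_range] at hk
        rw [if_neg (show ¬ k ≤ d by omega), zero_mul]
    rw [hL, ← hR, ← hmaster]
    push_cast
    ring
  calc (∑ i ∈ Finset.range (d + 1), PowerSeries.monomial i ((B d i j : ℚ)))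
      = (∑ i ∈ Finset.range (d + 1), PowerSeries.monomial i ((B d i j : ℚ))) *
        (((PowerSeries.invOneSubPow ℚ (d + 1) : (PowerSeries ℚ)ˣ) : PowerSeries ℚ) *
          (1 - PowerSeries.X : PowerSeries ℚ) ^ (d + 1)) := by rw [hunit, mul_one]
    _ = _ := by rw [← mul_assoc, key]
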